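/- Assume the chronological products T on subsets of {1,…,n} satisfy the causality axiom. Let P ⊔ Q = {1,…,n−1} be a partition with P ≠ ∅ and write Qn := Q ∪ {n}. If x(Qn) ≥ x(P) then A′_n = −T(Qn)·T(P), and if x(P) ≥ x(Qn) then R′_n = −T(P)·T(Qn). -/

import Mathlib

/-- The Minkowski quadratic form on `ℝ⁴`. -/
def minkQ (x : Fin 4 → ℝ) : ℝ := x 0 ^ 2 - x 1 ^ 2 - x 2 ^ 2 - x 3 ^ 2

/-- The open backward light cone `V⁻`. -/
def Vminus : Set (Fin 4 → ℝ) := {x | 0 < minkQ x ∧ x 0 < 0}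

/-- Sum over all ordered partitions of `X` into `r ≥ 1` nonempty pairwise disjoint blocks
`X₁, …, X_r` of `(-1)^r * T X₁ * ⋯ * T X_r` (with value `1` for `X = ∅`), computed by peeling
off the first block. -/
def opSum {A : Type*} [Ring A] {ι : Type*} [DecidableEq ι]
    (T : Finset ι → A) (X : Finset ι) : A :=
  if _hX : X = ∅ then 1
  else
    ∑ Y ∈ (X.powerset.filter (fun Y => Y ≠ ∅)).attach,
      (-1 : A) * T Y.1 * opSum T (X \ Y.1)
termination_by X.card
decreasing_by
  have hY := Y.2
  simp only [Finset.mem_filter, Finset.mem_powerset] at hY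
  have h1 : Y.1.card ≤ X.card := Finset.card_le_card hY.1
  have h2 : 0 < Y.1.card := Finset.card_pos.mpr (Finset.nonempty_iff_ne_empty.mpr hY.2)
  rw [Finset.card_sdiff, Finset.inter_eq_left.mpr hY.1]
  omega

/-- The antichronological products `T̄`, defined by `T̄(∅) = 1` and
`(−1)^{|X|} T̄(X) = Σ_{r=1}^{|X|} (−1)^r Σ T(X₁)⋯T(X_r)`, the inner sum running over all ordered
partitions of `X` into `r` nonempty pairwise disjoint subsets. -/
def chronoBar {A : Type*} [Ring A] {ι : Type*} [DecidableEq ι]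
    (T : Finset ι → A) (X : Finset ι) : A :=
  (-1 : A) ^ X.card * opSum T X

/-- The advanced sum `A′_n := Σ (−1)^{|Y|} T(X)·T̄(Y)`, over all partitions
`X ⊔ Y = {1,…,n}` with `n ∈ X` (here `lst` plays the role of the index `n`) and `Y ≠ ∅`. -/
def advP {A : Type*} [Ring A] {ι : Type*} [Fintype ι] [DecidableEq ι]
    (T : Finset ι → A) (lst : ι) : A :=
  ∑ Y ∈ (Finset.univ.erase lst).powerset.filter (fun Y => Y ≠ ∅),
    (-1 : A) ^ Y.card * (T Yᶜ * chronoBar T Y)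

/-- The retarded sum `R′_n := Σ (−1)^{|Y|} T̄(Y)·T(X)`, over all partitions
`X ⊔ Y = {1,…,n}` with `n ∈ X` (here `lst` plays the role of the index `n`) and `Y ≠ ∅`. -/
def retP {A : Type*} [Ring A] {ι : Type*} [Fintype ι] [DecidableEq ι]
    (T : Finset ι → A) (lst : ι) : A :=
  ∑ Y ∈ (Finset.univ.erase lst).powerset.filter (fun Y => Y ≠ ∅),
    (-1 : A) ^ Y.card * (chronoBar T Y * T Yᶜ)

section Aux
open Finset
variable {A : Type*} [Ring A] {ι : Type*} [DecidableEq ι]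

lemma opSum_empty (T : Finset ι → A) : opSum T ∅ = 1 := by rw [opSum]; simp

lemma opSum_ne (T : Finset ι → A) {X : Finset ι} (hX : X ≠ ∅) :
    opSum T X = ∑ Y ∈ X.powerset.filter (fun Y => Y ≠ ∅), (-1 : A) * T Y * opSum T (X \ Y) := by
  rw [opSum, dif_neg hX, ← Finset.sum_attach (X.powerset.filter (fun Y => Y ≠ ∅))
    (fun Y => (-1 : A) * T Y * opSum T (X \ Y))]

lemma chronoBar_empty (T : Finset ι → A) : chronoBar T ∅ = 1 := by
  simp [chronoBar, opSum_empty]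

/-- commuting sign powers -/
lemma negOnePow_comm (m : ℕ) (a : A) : a * (-1 : A) ^ m = (-1 : A) ^ m * a :=
  ((Commute.neg_one_left a).pow_left m).eq.symm

lemma sign_mul_sign (k m : ℕ) (a b : A) :
    ((-1 : A) ^ k * a) * ((-1 : A) ^ m * b) = (-1 : A) ^ (k + m) * (a * b) := by
  rw [pow_add, mul_assoc ((-1:A)^k), ← mul_assoc a, negOnePow_comm m a,
    mul_assoc ((-1:A)^m), ← mul_assoc ((-1:A)^k)]

def delta : Finset ι → A := fun X => if X = ∅ then 1 else 0

def conv (f g : Finset ι → A) (X : Finset ι) : A :=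
  ∑ Y ∈ X.powerset, f Y * g (X \ Y)

/-- the signed T -/
lemma conv_delta (f : Finset ι → A) : conv f delta = f := by
  funext X
  rw [conv, Finset.sum_eq_single_of_mem X (Finset.mem_powerset_self X)]
  · simp [delta]
  · intro Y hY hne
    have : X \ Y ≠ ∅ := by
      simp only [Finset.mem_powerset] at hY
      intro h
      exact hne (Finset.Subset.antisymm hY (by
        intro a ha
        by_contra hb
        exact (Finset.notMem_empty a) (h ▸ Finset.mem_sdiff.mpr ⟨ha, hb⟩)))
    simp [delta, this]

lemma delta_conv (f : Finset ι → A) : conv delta f = f := by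
  funext X
  rw [conv, Finset.sum_eq_single_of_mem ∅ (Finset.empty_mem_powerset X)]
  · simp [delta]
  · intro Y hY hne
    simp [delta, hne]

lemma conv_assoc (f g h : Finset ι → A) : conv (conv f g) h = conv f (conv g h) := by
  funext X
  rw [conv, conv]
  simp only [conv, Finset.sum_mul, Finset.mul_sum]
  rw [Finset.sum_sigma', Finset.sum_sigma']
  refine Finset.sum_bij' (fun p _ => (⟨p.2, p.1 \ p.2⟩ : Σ _ : Finset ι, Finset ι))
    (fun p _ => (⟨p.1 ∪ p.2, p.1⟩ : Σ _ : Finset ι, Finset ι)) ?_ ?_ ?_ ?_ ?_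
  · rintro ⟨Y, Z⟩ hp
    simp only [Finset.mem_sigma, Finset.mem_powerset] at hp ⊢
    exact ⟨hp.2.trans hp.1, Finset.sdiff_subset_sdiff hp.1 (le_refl _)⟩
  · rintro ⟨Z, W⟩ hp
    simp only [Finset.mem_sigma, Finset.mem_powerset] at hp ⊢
    constructor
    · exact Finset.union_subset hp.1 (hp.2.trans (Finset.sdiff_subset))
    · exact Finset.subset_union_left
  · rintro ⟨Y, Z⟩ hp
    simp only [Finset.mem_sigma, Finset.mem_powerset] at hp
    simp [Finset.union_sdiff_of_subset hp.2]
  · rintro ⟨Z, W⟩ hp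
    simp only [Finset.mem_sigma, Finset.mem_powerset] at hp
    have hdisj : Disjoint Z W := Finset.disjoint_of_subset_right hp.2 Finset.sdiff_disjoint.symm
    simp [Finset.union_sdiff_cancel_left hdisj]
  · rintro ⟨Y, Z⟩ hp
    simp only [Finset.mem_sigma, Finset.mem_powerset] at hp
    have h1 : (X \ Z) \ (Y \ Z) = X \ Y := by
      ext a
      simp only [Finset.mem_sdiff, not_and, not_not]
      constructor
      · rintro ⟨⟨ha, hz⟩, hy⟩
        exact ⟨ha, fun hY => hz ((hy hY))⟩
      · rintro ⟨ha, hy⟩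
        exact ⟨⟨ha, fun hz => hy (hp.2 hz)⟩, fun hY => absurd hY hy⟩
    rw [h1, mul_assoc]

def tsgn (T : Finset ι → A) : Finset ι → A := fun X => (-1 : A) ^ X.card * T X

lemma conv_tsgn_chronoBar (T : Finset ι → A) (hT1 : T ∅ = 1) :
    conv (tsgn T) (chronoBar T) = delta := by
  funext X
  by_cases hX : X = ∅
  · subst hX; simp [conv, delta, tsgn, hT1, chronoBar_empty]
  · rw [conv, delta, if_neg hX]
    have hsplit := Finset.sum_filter_add_sum_filter_not X.powerset (fun Y => Y = ∅)
      (fun Y => tsgn T Y * chronoBar T (X \ Y))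
    have h1 : X.powerset.filter (fun Y => Y = ∅) = {∅} := by
      ext Y; simp only [Finset.mem_filter, Finset.mem_powerset, Finset.mem_singleton]
      exact ⟨fun h => h.2, fun h => ⟨h ▸ Finset.empty_subset X, h⟩⟩
    rw [h1] at hsplit
    have h2 : (X.powerset.filter (fun Y => ¬ Y = ∅)) = (X.powerset.filter (fun Y => Y ≠ ∅)) := rfl
    rw [h2] at hsplit
    rw [← hsplit, Finset.sum_singleton]
    have hemp : tsgn T ∅ * chronoBar T (X \ ∅) = chronoBar T X := by
      simp [tsgn, hT1, chronoBar]
    rw [hemp]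
    -- remaining sum equals -chronoBar X
    have hrest : ∑ Y ∈ X.powerset.filter (fun Y => Y ≠ ∅), tsgn T Y * chronoBar T (X \ Y)
        = - chronoBar T X := by
      rw [chronoBar, opSum_ne T hX, Finset.mul_sum, ← Finset.sum_neg_distrib]
      refine Finset.sum_congr rfl ?_
      intro Y hY
      simp only [Finset.mem_filter, Finset.mem_powerset] at hY
      have hcard : Y.card + (X \ Y).card = X.card := by
        rw [Finset.card_sdiff, Finset.inter_eq_left.mpr hY.1]
        have := Finset.card_le_card hY.1
        omega
      rw [tsgn, chronoBar, sign_mul_sign, hcard]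
      simp [neg_one_mul, mul_assoc]
    rw [hrest]
    simp

/-- right inverse by recursion peeling the Y = X term -/
def rInv (f : Finset ι → A) (X : Finset ι) : A :=
  if _hX : X = ∅ then 1
  else - ∑ Y ∈ (X.powerset.filter (fun Y => Y ≠ X)).attach, rInv f Y.1 * f (X \ Y.1)
termination_by X.card
decreasing_by
  have hY := Y.2
  simp only [Finset.mem_filter, Finset.mem_powerset] at hY
  exact Finset.card_lt_card (Finset.ssubset_iff_subset_ne.mpr ⟨hY.1, hY.2⟩)

lemma rInv_empty (f : Finset ι → A) : rInv f ∅ = 1 := by rw [rInv]; simp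

lemma conv_rInv (f : Finset ι → A) (hf : f ∅ = 1) : conv (rInv f) f = delta := by
  funext X
  by_cases hX : X = ∅
  · subst hX; simp [conv, delta, rInv_empty, hf]
  · rw [conv, delta, if_neg hX]
    have hsplit := Finset.sum_filter_add_sum_filter_not X.powerset (fun Y => Y = X)
      (fun Y => rInv f Y * f (X \ Y))
    have h1 : X.powerset.filter (fun Y => Y = X) = {X} := by
      ext Y; simp only [Finset.mem_filter, Finset.mem_powerset, Finset.mem_singleton]
      exact ⟨fun h => h.2, fun h => ⟨h ▸ Finset.Subset.refl X, h⟩⟩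
    rw [h1] at hsplit
    rw [← hsplit, Finset.sum_singleton, Finset.sdiff_self, hf, mul_one]
    have hrec : rInv f X = - ∑ Y ∈ X.powerset.filter (fun Y => ¬ Y = X),
        rInv f Y * f (X \ Y) := by
      rw [rInv, dif_neg hX, ← Finset.sum_attach (X.powerset.filter (fun Y => Y ≠ X))
        (fun Y => rInv f Y * f (X \ Y))]
    rw [hrec]
    exact neg_add_cancel _

/-- pointwise mul of conv on the right -/
lemma conv_apply (f g : Finset ι → A) (X : Finset ι) :
    conv f g X = ∑ Y ∈ X.powerset, f Y * g (X \ Y) := rfl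

lemma conv_chronoBar_tsgn (T : Finset ι → A) (hT1 : T ∅ = 1) :
    conv (chronoBar T) (tsgn T) = delta := by
  have hf : tsgn T ∅ = 1 := by simp [tsgn, hT1]
  have hbar : rInv (tsgn T) = chronoBar T := by
    calc rInv (tsgn T) = conv (rInv (tsgn T)) delta := (conv_delta _).symm
    _ = conv (rInv (tsgn T)) (conv (tsgn T) (chronoBar T)) := by
        rw [conv_tsgn_chronoBar T hT1]
    _ = conv (conv (rInv (tsgn T)) (tsgn T)) (chronoBar T) := (conv_assoc _ _ _).symm
    _ = conv delta (chronoBar T) := by rw [conv_rInv _ hf]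
    _ = chronoBar T := delta_conv _
  rw [← hbar]
  exact conv_rInv _ hf

/-- localized uniqueness -/
lemma eq_chronoBar_of_local (T : Finset ι → A) (hT1 : T ∅ = 1) (g : Finset ι → A)
    (X : Finset ι) (h : ∀ Y ∈ X.powerset, conv g (tsgn T) Y = delta Y) :
    g X = chronoBar T X := by
  have h1 : conv (conv g (tsgn T)) (chronoBar T) X = chronoBar T X := by
    rw [conv_apply]
    rw [Finset.sum_eq_single_of_mem ∅ (Finset.empty_mem_powerset X)]
    · rw [h ∅ (Finset.empty_mem_powerset X)]
      simp [delta]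
    · intro Y hY hne
      rw [h Y hY]
      simp [delta, hne]
  have h2 : conv g (conv (tsgn T) (chronoBar T)) X = g X := by
    rw [conv_tsgn_chronoBar T hT1, conv_delta]
  rw [← h2, ← conv_assoc, h1]
/-- splitting a powerset sum over a disjoint union -/
lemma sum_powerset_union {M : Type*} [AddCommMonoid M] {X₁ X₂ : Finset ι}
    (hdisj : Disjoint X₁ X₂) (F : Finset ι → M) :
    ∑ Y ∈ (X₁ ∪ X₂).powerset, F Y
      = ∑ Y₁ ∈ X₁.powerset, ∑ Y₂ ∈ X₂.powerset, F (Y₁ ∪ Y₂) := by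
  rw [← Finset.sum_product']
  refine Finset.sum_bij' (fun Y _ => (Y ∩ X₁, Y ∩ X₂)) (fun p _ => p.1 ∪ p.2) ?_ ?_ ?_ ?_ ?_
  · intro Y hY
    simp only [Finset.mem_product, Finset.mem_powerset]
    exact ⟨Finset.inter_subset_right, Finset.inter_subset_right⟩
  · rintro ⟨Y₁, Y₂⟩ hp
    simp only [Finset.mem_product, Finset.mem_powerset] at hp ⊢
    exact Finset.union_subset_union hp.1 hp.2
  · intro Y hY
    simp only [Finset.mem_powerset] at hY
    show Y ∩ X₁ ∪ Y ∩ X₂ = Y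
    ext a
    have := @hY a
    simp only [Finset.mem_union, Finset.mem_inter] at *
    tauto
  · rintro ⟨Y₁, Y₂⟩ hp
    simp only [Finset.mem_product, Finset.mem_powerset] at hp
    have hd : ∀ a, ¬(a ∈ X₁ ∧ a ∈ X₂) := by
      intro a ⟨h1, h2⟩
      exact (Finset.disjoint_left.mp hdisj) h1 h2
    have e1 : (Y₁ ∪ Y₂) ∩ X₁ = Y₁ := by
      ext a
      have h1 := @hp.1 a; have h2 := @hp.2 a; have h3 := hd a
      simp only [Finset.mem_union, Finset.mem_inter] at *
      tauto
    have e2 : (Y₁ ∪ Y₂) ∩ X₂ = Y₂ := by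
      ext a
      have h1 := @hp.1 a; have h2 := @hp.2 a; have h3 := hd a
      simp only [Finset.mem_union, Finset.mem_inter] at *
      tauto
    show ((Y₁ ∪ Y₂) ∩ X₁, (Y₁ ∪ Y₂) ∩ X₂) = (Y₁, Y₂)
    rw [e1, e2]
  · intro Y hY
    simp only [Finset.mem_powerset] at hY
    have : Y ∩ X₁ ∪ Y ∩ X₂ = Y := by
      ext a
      have := @hY a
      simp only [Finset.mem_union, Finset.mem_inter] at *
      tauto
    show F Y = F (Y ∩ X₁ ∪ Y ∩ X₂)
    rw [this]

/-- reindexing a powerset sum by complement within X -/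
lemma sum_powerset_sdiff {M : Type*} [AddCommMonoid M] (X : Finset ι) (F : Finset ι → M) :
    ∑ Y ∈ X.powerset, F (X \ Y) = ∑ Y ∈ X.powerset, F Y := by
  refine Finset.sum_bij' (fun Y _ => X \ Y) (fun Y _ => X \ Y) ?_ ?_ ?_ ?_ ?_ <;>
      intro Y hY
  · exact Finset.mem_powerset.mpr Finset.sdiff_subset
  · exact Finset.mem_powerset.mpr Finset.sdiff_subset
  · exact Finset.sdiff_sdiff_eq_self (Finset.mem_powerset.mp hY)
  · exact Finset.sdiff_sdiff_eq_self (Finset.mem_powerset.mp hY)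
  · rfl


lemma chronoBar_mul (T : Finset ι → A) (hT1 : T ∅ = 1) (S₁ S₂ : Finset ι)
    (hdisj : Disjoint S₁ S₂)
    (Hmul : ∀ A' ⊆ S₁, ∀ B' ⊆ S₂, T (A' ∪ B') = T B' * T A')
    {X : Finset ι} (hX : X ⊆ S₁ ∪ S₂) :
    chronoBar T X = chronoBar T (X ∩ S₁) * chronoBar T (X ∩ S₂) := by
  have htsgn : ∀ A' ⊆ S₁, ∀ B' ⊆ S₂, tsgn T (A' ∪ B') = tsgn T B' * tsgn T A' := by
    intro A' hA B' hB
    have hab : Disjoint A' B' := Finset.disjoint_of_subset_left hA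
      (Finset.disjoint_of_subset_right hB hdisj)
    rw [tsgn, tsgn, tsgn, sign_mul_sign, Hmul A' hA B' hB,
      Finset.card_union_of_disjoint hab, add_comm]
  refine (eq_chronoBar_of_local T hT1
    (fun Z => chronoBar T (Z ∩ S₁) * chronoBar T (Z ∩ S₂)) X ?_).symm
  intro Y hY
  rw [Finset.mem_powerset] at hY
  have hYS : Y ⊆ S₁ ∪ S₂ := hY.trans hX
  have hY12 : Y = (Y ∩ S₁) ∪ (Y ∩ S₂) := by
    ext a; have := @hYS a
    simp only [Finset.mem_union, Finset.mem_inter] at *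
    tauto
  set Y₁ := Y ∩ S₁ with hY₁
  set Y₂ := Y ∩ S₂ with hY₂
  have hd12 : Disjoint Y₁ Y₂ := Finset.disjoint_of_subset_left Finset.inter_subset_right
    (Finset.disjoint_of_subset_right Finset.inter_subset_right hdisj)
  have key : ∀ Z₁ ⊆ Y₁, ∀ Z₂ ⊆ Y₂,
      (chronoBar T ((Z₁ ∪ Z₂) ∩ S₁) * chronoBar T ((Z₁ ∪ Z₂) ∩ S₂)) *
        tsgn T ((Y₁ ∪ Y₂) \ (Z₁ ∪ Z₂))
      = chronoBar T Z₁ * ((chronoBar T Z₂ * tsgn T (Y₂ \ Z₂)) * tsgn T (Y₁ \ Z₁)) := by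
    intro Z₁ hZ1 Z₂ hZ2
    have hZ1S : Z₁ ⊆ S₁ := hZ1.trans Finset.inter_subset_right
    have hZ2S : Z₂ ⊆ S₂ := hZ2.trans Finset.inter_subset_right
    have e1 : (Z₁ ∪ Z₂) ∩ S₁ = Z₁ := by
      ext a
      have h1 := @hZ1S a; have h2 := @hZ2S a
      have h3 := fun (h : a ∈ S₁) (h' : a ∈ S₂) => (Finset.disjoint_left.mp hdisj) h h'
      simp only [Finset.mem_union, Finset.mem_inter] at *
      tauto
    have e2 : (Z₁ ∪ Z₂) ∩ S₂ = Z₂ := by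
      ext a
      have h1 := @hZ1S a; have h2 := @hZ2S a
      have h3 := fun (h : a ∈ S₁) (h' : a ∈ S₂) => (Finset.disjoint_left.mp hdisj) h h'
      simp only [Finset.mem_union, Finset.mem_inter] at *
      tauto
    have e3 : (Y₁ ∪ Y₂) \ (Z₁ ∪ Z₂) = (Y₁ \ Z₁) ∪ (Y₂ \ Z₂) := by
      ext a
      have h1 := @hZ1 a; have h2 := @hZ2 a
      have h3 := fun (h : a ∈ Y₁) (h' : a ∈ Y₂) => (Finset.disjoint_left.mp hd12) h h'
      simp only [Finset.mem_union, Finset.mem_sdiff, Finset.mem_inter] at *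
      tauto
    have e4 : tsgn T ((Y₁ \ Z₁) ∪ (Y₂ \ Z₂)) = tsgn T (Y₂ \ Z₂) * tsgn T (Y₁ \ Z₁) :=
      htsgn _ ((Finset.sdiff_subset).trans Finset.inter_subset_right) _
        ((Finset.sdiff_subset).trans Finset.inter_subset_right)
    rw [e1, e2, e3, e4, mul_assoc, mul_assoc]
  -- now compute the convolution
  have hconv2 : ∀ W : Finset ι, conv (chronoBar T) (tsgn T) W = delta W :=
    fun W => congrFun (conv_chronoBar_tsgn T hT1) W
  rw [conv_apply]
  conv_lhs => rw [hY12]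
  rw [sum_powerset_union hd12]
  have inner : ∀ Z₁ ∈ Y₁.powerset,
      ∑ Z₂ ∈ Y₂.powerset, (chronoBar T ((Z₁ ∪ Z₂) ∩ S₁) * chronoBar T ((Z₁ ∪ Z₂) ∩ S₂)) *
        tsgn T ((Y₁ ∪ Y₂) \ (Z₁ ∪ Z₂))
      = chronoBar T Z₁ * ((delta Y₂ : A) * tsgn T (Y₁ \ Z₁)) := by
    intro Z₁ hZ1
    rw [Finset.mem_powerset] at hZ1
    rw [Finset.sum_congr rfl (fun Z₂ hZ2 => key Z₁ hZ1 Z₂ (Finset.mem_powerset.mp hZ2))]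
    rw [← Finset.mul_sum, ← Finset.sum_mul, ← conv_apply, hconv2]
  rw [Finset.sum_congr rfl inner]
  by_cases hY2 : Y₂ = ∅
  · have hYeq : Y = Y₁ := by rw [hY12, hY2, Finset.union_empty]
    have hdel : (delta Y₂ : A) = 1 := by rw [hY2]; simp [delta]
    rw [hdel]
    simp only [one_mul]
    rw [← conv_apply, hconv2, hYeq]
  · have hYne : Y ≠ ∅ := by
      intro h
      apply hY2
      rw [hY₂, h, Finset.empty_inter]
    simp only [delta, if_neg hY2, if_neg hYne, zero_mul, mul_zero, Finset.sum_const_zero]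

lemma sign_reassoc (k m : ℕ) (a b c d : A) :
    (-1 : A) ^ (k + m) * ((a * b) * (c * d))
      = ((-1 : A) ^ k * a) * (((-1 : A) ^ m * (b * c)) * d) := by
  rw [mul_assoc ((-1:A)^m) (b*c) d, sign_mul_sign]
  congr 1
  simp [mul_assoc]

end Aux

set_option maxHeartbeats 2000000 in
/-- Lemma on the advanced/retarded sums: for a partition `P ⊔ Q = {1,…,n−1}` with `P ≠ ∅`,
if `x(Q ∪ {n}) ≥ x(P)` then `A′_n = −T(Qn)·T(P)`, and if `x(P) ≥ x(Q ∪ {n})` then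
`R′_n = −T(P)·T(Qn)`. -/
theorem advP_retP_eq_of_causality {A : Type*} [Ring A] (n : ℕ) (hn : 0 < n)
    (x : Fin n → Fin 4 → ℝ) (T : Finset (Fin n) → A) (hT1 : T ∅ = 1)
    (hcaus : ∀ S₁ S₂ : Finset (Fin n), Disjoint S₁ S₂ →
      (∀ i ∈ S₁, ∀ j ∈ S₂, x i - x j ∉ closure Vminus) → T (S₁ ∪ S₂) = T S₁ * T S₂)
    (P Q : Finset (Fin n)) (hd : Disjoint P Q)
    (hPQ : P ∪ Q = Finset.univ.erase ⟨n - 1, by omega⟩) (hP : P ≠ ∅) :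
    ((∀ i ∈ insert (⟨n - 1, by omega⟩ : Fin n) Q, ∀ j ∈ P, x i - x j ∉ closure Vminus) →
      advP T ⟨n - 1, by omega⟩ = -(T (insert ⟨n - 1, by omega⟩ Q) * T P)) ∧
    ((∀ i ∈ P, ∀ j ∈ insert (⟨n - 1, by omega⟩ : Fin n) Q, x i - x j ∉ closure Vminus) →
      retP T ⟨n - 1, by omega⟩ = -(T P * T (insert ⟨n - 1, by omega⟩ Q))) := by
  have hn1 : n - 1 < n := by omega
  set lst : Fin n := ⟨n - 1, by omega⟩ with hlst
  set Qn : Finset (Fin n) := insert lst Q with hQn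
  have hlstE : lst ∉ P ∪ Q := by rw [hPQ]; exact Finset.notMem_erase _ _
  have hlP : lst ∉ P := fun h => hlstE (Finset.mem_union_left _ h)
  have hlQ : lst ∉ Q := fun h => hlstE (Finset.mem_union_right _ h)
  have hQsub : Q ⊆ Qn := Finset.subset_insert _ _
  have hdQnP : Disjoint Qn P := by
    rw [Finset.disjoint_left]
    intro a ha hp
    rcases Finset.mem_insert.mp ha with h | h
    · exact hlP (h ▸ hp)
    · exact (Finset.disjoint_right.mp hd) h hp
  have hET : Finset.univ.erase lst = Q ∪ P := by rw [← hPQ, Finset.union_comm]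
  have huniv : (Finset.univ : Finset (Fin n)) = Qn ∪ P := by
    rw [hQn, Finset.insert_union, Finset.union_comm Q P, hPQ,
      Finset.insert_erase (Finset.mem_univ lst)]
  have hmem : ∀ a : Fin n, a ∈ Qn ∨ a ∈ P := by
    intro a
    exact Finset.mem_union.mp (huniv ▸ Finset.mem_univ a)
  have hcompl : ∀ Yq ⊆ Q, ∀ Yp ⊆ P, (Yq ∪ Yp)ᶜ = (Qn \ Yq) ∪ (P \ Yp) := by
    intro Yq hYq Yp hYp
    ext a
    have h0 := hmem a
    have h1 := @hYq a; have h2 := @hYp a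
    have h3 := fun (h : a ∈ Qn) (h' : a ∈ P) => (Finset.disjoint_left.mp hdQnP) h h'
    have h4 : a ∈ Q → a ∈ Qn := fun h => Finset.mem_insert_of_mem h
    simp only [Finset.mem_compl, Finset.mem_union, Finset.mem_sdiff] at *
    tauto
  have hintP : ∀ Yq ⊆ Q, ∀ Yp ⊆ P, (Yq ∪ Yp) ∩ P = Yp := by
    intro Yq hYq Yp hYp
    ext a
    have h1 := @hYq a; have h2 := @hYp a
    have h3 := fun (h : a ∈ P) (h' : a ∈ Q) => (Finset.disjoint_left.mp hd) h h'
    simp only [Finset.mem_union, Finset.mem_inter] at *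
    tauto
  have hintQ : ∀ Yq ⊆ Q, ∀ Yp ⊆ P, (Yq ∪ Yp) ∩ Q = Yq := by
    intro Yq hYq Yp hYp
    ext a
    have h1 := @hYq a; have h2 := @hYp a
    have h3 := fun (h : a ∈ P) (h' : a ∈ Q) => (Finset.disjoint_left.mp hd) h h'
    simp only [Finset.mem_union, Finset.mem_inter] at *
    tauto
  have hcardU : ∀ Yq ⊆ Q, ∀ Yp ⊆ P, (Yq ∪ Yp).card = Yq.card + Yp.card := by
    intro Yq hYq Yp hYp
    exact Finset.card_union_of_disjoint (hd.symm.mono hYq hYp)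
  have hfe : (Finset.univ.erase lst).powerset.filter (fun Y => Y ≠ ∅)
      = (Finset.univ.erase lst).powerset.erase ∅ := Finset.filter_ne' _ _
  have hPsub : ∀ Yq ⊆ Q, ∀ Yp ⊆ P, Yq ∪ Yp ⊆ P ∪ Q := fun Yq hYq Yp hYp =>
    Finset.union_subset (hYq.trans Finset.subset_union_right)
      (hYp.trans Finset.subset_union_left)
  constructor
  · -- advanced part
    intro Hadv
    have hsplit : ∀ S₁' S₂' : Finset (Fin n), S₁' ⊆ Qn → S₂' ⊆ P →
        T (S₁' ∪ S₂') = T S₁' * T S₂' := fun S₁' S₂' h1 h2 =>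
      hcaus S₁' S₂' (hdQnP.mono h1 h2) (fun i hi j hj => Hadv i (h1 hi) j (h2 hj))
    have hbar : ∀ {X : Finset (Fin n)}, X ⊆ P ∪ Q →
        chronoBar T X = chronoBar T (X ∩ P) * chronoBar T (X ∩ Q) := by
      intro X hX
      exact chronoBar_mul T hT1 P Q hd (fun A' hA B' hB => by
        rw [Finset.union_comm]
        exact hsplit B' A' (hB.trans hQsub) hA) hX
    have hG : ∑ Z ∈ P.powerset, ((-1 : A) ^ Z.card * (T (P \ Z) * chronoBar T Z)) = 0 := by
      have h1 : ∀ Z ∈ P.powerset, (-1 : A) ^ Z.card * (T (P \ Z) * chronoBar T Z)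
          = (-1 : A) ^ P.card * (tsgn T (P \ Z) * chronoBar T (P \ (P \ Z))) := by
        intro Z hZ
        rw [Finset.mem_powerset] at hZ
        rw [Finset.sdiff_sdiff_eq_self hZ, tsgn,
          mul_assoc ((-1 : A) ^ (P \ Z).card), ← mul_assoc ((-1 : A) ^ P.card), ← pow_add]
        have hcZ : Z.card + (P \ Z).card = P.card := by
          rw [Finset.card_sdiff, Finset.inter_eq_left.mpr hZ]
          have := Finset.card_le_card hZ
          omega
        have hsig : ((-1 : A)) ^ (P.card + (P \ Z).card) = (-1 : A) ^ Z.card := by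
          rw [show P.card + (P \ Z).card = Z.card + 2 * (P \ Z).card by omega,
            pow_add, pow_mul]
          norm_num
        rw [hsig]
      rw [Finset.sum_congr rfl h1, ← Finset.mul_sum]
      have h2 : ∑ Z ∈ P.powerset, tsgn T (P \ Z) * chronoBar T (P \ (P \ Z))
          = conv (tsgn T) (chronoBar T) P := by
        rw [conv_apply, ← sum_powerset_sdiff P
          (fun W => tsgn T W * chronoBar T (P \ W))]
      rw [h2, congrFun (conv_tsgn_chronoBar T hT1) P]
      simp [delta, hP]
    have hzero : ∑ Y ∈ (Finset.univ.erase lst).powerset,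
        ((-1 : A) ^ Y.card * (T Yᶜ * chronoBar T Y)) = 0 := by
      rw [hET, sum_powerset_union hd.symm]
      apply Finset.sum_eq_zero
      intro Yq hYq
      rw [Finset.mem_powerset] at hYq
      have hterm : ∀ Yp ∈ P.powerset,
          (-1 : A) ^ (Yq ∪ Yp).card * (T (Yq ∪ Yp)ᶜ * chronoBar T (Yq ∪ Yp))
          = ((-1 : A) ^ Yq.card * T (Qn \ Yq)) *
            (((-1 : A) ^ Yp.card * (T (P \ Yp) * chronoBar T Yp)) * chronoBar T Yq) := by
        intro Yp hYp
        rw [Finset.mem_powerset] at hYp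
        rw [hcardU Yq hYq Yp hYp, hcompl Yq hYq Yp hYp,
          hsplit (Qn \ Yq) (P \ Yp) Finset.sdiff_subset Finset.sdiff_subset,
          hbar (hPsub Yq hYq Yp hYp), hintP Yq hYq Yp hYp, hintQ Yq hYq Yp hYp]
        exact sign_reassoc _ _ _ _ _ _
      rw [Finset.sum_congr rfl hterm, ← Finset.mul_sum, ← Finset.sum_mul, hG,
        zero_mul, mul_zero]
    rw [advP, hfe, Finset.sum_erase_eq_sub (Finset.empty_mem_powerset _), hzero]
    have hF0 : (-1 : A) ^ (∅ : Finset (Fin n)).card *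
        (T (∅ : Finset (Fin n))ᶜ * chronoBar T ∅) = T Qn * T P := by
      rw [chronoBar_empty, Finset.card_empty, pow_zero, one_mul, mul_one,
        Finset.compl_empty, huniv]
      exact hsplit Qn P (le_refl _) (le_refl _)
    rw [hF0, zero_sub]
  · -- retarded part
    intro Hret
    have hsplit : ∀ S₁' S₂' : Finset (Fin n), S₁' ⊆ P → S₂' ⊆ Qn →
        T (S₁' ∪ S₂') = T S₁' * T S₂' := fun S₁' S₂' h1 h2 =>
      hcaus S₁' S₂' (hdQnP.symm.mono h1 h2) (fun i hi j hj => Hret i (h1 hi) j (h2 hj))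
    have hbar : ∀ {X : Finset (Fin n)}, X ⊆ Q ∪ P →
        chronoBar T X = chronoBar T (X ∩ Q) * chronoBar T (X ∩ P) := by
      intro X hX
      exact chronoBar_mul T hT1 Q P hd.symm (fun A' hA B' hB => by
        rw [Finset.union_comm]
        exact hsplit B' A' hB (hA.trans hQsub)) hX
    have hG : ∑ Z ∈ P.powerset, ((-1 : A) ^ Z.card * (chronoBar T Z * T (P \ Z))) = 0 := by
      have h1 : ∀ Z ∈ P.powerset, (-1 : A) ^ Z.card * (chronoBar T Z * T (P \ Z))
          = (-1 : A) ^ P.card * (chronoBar T Z * tsgn T (P \ Z)) := by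
        intro Z hZ
        rw [Finset.mem_powerset] at hZ
        rw [tsgn, ← mul_assoc (chronoBar T Z), negOnePow_comm ((P \ Z).card) (chronoBar T Z),
          mul_assoc ((-1 : A) ^ (P \ Z).card), ← mul_assoc ((-1 : A) ^ P.card), ← pow_add]
        have hcZ : Z.card + (P \ Z).card = P.card := by
          rw [Finset.card_sdiff, Finset.inter_eq_left.mpr hZ]
          have := Finset.card_le_card hZ
          omega
        have hsig : ((-1 : A)) ^ (P.card + (P \ Z).card) = (-1 : A) ^ Z.card := by
          rw [show P.card + (P \ Z).card = Z.card + 2 * (P \ Z).card by omega,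
            pow_add, pow_mul]
          norm_num
        rw [hsig]
      rw [Finset.sum_congr rfl h1, ← Finset.mul_sum, ← conv_apply,
        congrFun (conv_chronoBar_tsgn T hT1) P]
      simp [delta, hP]
    have hzero : ∑ Y ∈ (Finset.univ.erase lst).powerset,
        ((-1 : A) ^ Y.card * (chronoBar T Y * T Yᶜ)) = 0 := by
      rw [hET, sum_powerset_union hd.symm]
      apply Finset.sum_eq_zero
      intro Yq hYq
      rw [Finset.mem_powerset] at hYq
      have hterm : ∀ Yp ∈ P.powerset,
          (-1 : A) ^ (Yq ∪ Yp).card * (chronoBar T (Yq ∪ Yp) * T (Yq ∪ Yp)ᶜ)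
          = ((-1 : A) ^ Yq.card * chronoBar T Yq) *
            (((-1 : A) ^ Yp.card * (chronoBar T Yp * T (P \ Yp))) * T (Qn \ Yq)) := by
        intro Yp hYp
        rw [Finset.mem_powerset] at hYp
        have hcc : (Yq ∪ Yp)ᶜ = (P \ Yp) ∪ (Qn \ Yq) := by
          rw [hcompl Yq hYq Yp hYp, Finset.union_comm]
        rw [hcardU Yq hYq Yp hYp, hcc,
          hsplit (P \ Yp) (Qn \ Yq) Finset.sdiff_subset Finset.sdiff_subset,
          hbar (by rw [Finset.union_comm Q P]; exact hPsub Yq hYq Yp hYp),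
          hintP Yq hYq Yp hYp, hintQ Yq hYq Yp hYp]
        exact sign_reassoc _ _ _ _ _ _
      rw [Finset.sum_congr rfl hterm, ← Finset.mul_sum, ← Finset.sum_mul, hG,
        zero_mul, mul_zero]
    rw [retP, hfe, Finset.sum_erase_eq_sub (Finset.empty_mem_powerset _), hzero]
    have hF0 : (-1 : A) ^ (∅ : Finset (Fin n)).card *
        (chronoBar T ∅ * T (∅ : Finset (Fin n))ᶜ) = T P * T Qn := by
      rw [chronoBar_empty, Finset.card_empty, pow_zero, one_mul, one_mul,
        Finset.compl_empty, huniv, Finset.union_comm]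
      exact hsplit P Qn (le_refl _) (le_refl _)
    rw [hF0, zero_sub]
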